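/- Define R(y) = μ_p·E[(K_p − y·S̃)⁺] + μ_c·E[(y·S̃ − K_c)⁺] for y > 0, where S̃ = S₀·exp(rT − σ²T/2 + σ√T·Z), Z standard normal. Then R is differentiable at y = 1 with R'(1) = e^{rT}·S₀·(μ_p(Φ(d_p) − 1) + μ_c·Φ(d_c)). In particular R'(1) = 0 if and only if μ_c/μ_p = (1 − Φ(d_p))/Φ(d_c). -/

import Mathlib

open MeasureTheory ProbabilityTheory Real Set

/-- Standard normal CDF. -/
noncomputable def Phi (x : ℝ) : ℝ :=
  ∫ y in Set.Iic x, (Real.sqrt (2 * Real.pi))⁻¹ * Real.exp (-(y ^ 2) / 2)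

/-- Standard normal density. -/
noncomputable def phi (y : ℝ) : ℝ := (Real.sqrt (2 * Real.pi))⁻¹ * Real.exp (-(y ^ 2) / 2)

/-- Black-Scholes d value. -/
noncomputable def dBS (S₀ K r T σ : ℝ) : ℝ :=
  (Real.log (S₀ / K) + T * (r + σ ^ 2 / 2)) / (σ * Real.sqrt T)

/-- Black-Scholes call price (closed form). -/
noncomputable def callBS (S₀ K r T σ : ℝ) : ℝ :=
  S₀ * Phi (dBS S₀ K r T σ) - K * Real.exp (-(r * T)) * Phi (dBS S₀ K r T σ - σ * Real.sqrt T)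

/-- Black-Scholes put price (via put-call parity). -/
noncomputable def putBS (S₀ K r T σ : ℝ) : ℝ :=
  callBS S₀ K r T σ - S₀ + K * Real.exp (-(r * T))

open scoped ENNReal NNReal

lemma phi_pos (x : ℝ) : 0 < phi x := by
  have : 0 < Real.sqrt (2 * Real.pi) := Real.sqrt_pos.2 (by positivity)
  exact mul_pos (inv_pos.2 this) (Real.exp_pos _)

lemma continuous_phi : Continuous phi := by
  unfold phi; fun_prop

lemma integrable_phi : Integrable phi := by
  have h := (integrable_exp_neg_mul_sq (b := (1:ℝ)/2) (by norm_num)).const_mul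
    (Real.sqrt (2 * Real.pi))⁻¹
  refine h.congr (Filter.Eventually.of_forall fun x => ?_)
  unfold phi; ring_nf

lemma integral_phi : ∫ z, phi z = 1 := by
  have h : ∀ z : ℝ, phi z = (Real.sqrt (2 * Real.pi))⁻¹ * Real.exp (-(1/2) * z ^ 2) := by
    intro z; unfold phi; ring_nf
  simp_rw [h]
  rw [integral_const_mul, integral_gaussian]
  rw [show Real.pi / (1/2) = 2 * Real.pi by ring]
  exact inv_mul_cancel₀ (ne_of_gt (Real.sqrt_pos.2 (by positivity)))

lemma phi_comp_sub (z b : ℝ) : Real.exp (b * z - b ^ 2 / 2) * phi z = phi (z - b) := by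
  unfold phi
  rw [mul_comm, mul_assoc, ← Real.exp_add]
  congr 2
  ring

lemma Phi_eq (x : ℝ) : Phi x = ∫ z in Iic x, phi z := rfl

lemma integral_Ici_phi (x : ℝ) : ∫ z in Ici x, phi z = 1 - Phi x := by
  have h := integral_add_compl (measurableSet_Iic (a := x)) integrable_phi
  rw [compl_Iic, ← integral_Ici_eq_integral_Ioi, integral_phi] at h
  rw [Phi_eq]; linarith

lemma Phi_neg (x : ℝ) : Phi (-x) = 1 - Phi x := by
  have h : ∀ z : ℝ, phi (-z) = phi z := by intro z; unfold phi; rw [neg_pow]; ring_nf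
  have h2 := integral_comp_neg_Iic (-x) phi
  simp_rw [h, neg_neg] at h2
  rw [Phi_eq, h2, ← integral_Ici_eq_integral_Ioi, integral_Ici_phi]

lemma Phi_pos (x : ℝ) : 0 < Phi x := by
  rw [Phi_eq]
  rw [setIntegral_pos_iff_support_of_nonneg_ae
    (Filter.Eventually.of_forall fun z => (phi_pos z).le) integrable_phi.integrableOn]
  have hs : Function.support phi = univ := by
    ext z; simp [Function.mem_support, (phi_pos z).ne']
  rw [hs, univ_inter, Real.volume_Iic]
  exact ENNReal.zero_lt_top

lemma hasDerivAt_Phi (x : ℝ) : HasDerivAt Phi (phi x) x := by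
  have h1 : Phi = fun y => Phi 0 + ∫ t in (0:ℝ)..y, phi t := by
    funext y
    have := intervalIntegral.integral_Iic_sub_Iic (μ := volume) (f := phi) (a := (0:ℝ)) (b := y)
      integrable_phi.integrableOn integrable_phi.integrableOn
    rw [Phi_eq, Phi_eq]; linarith
  rw [h1]
  exact ((intervalIntegral.integral_hasDerivAt_right
    integrable_phi.intervalIntegrable
    continuous_phi.stronglyMeasurable.stronglyMeasurableAtFilter
    continuous_phi.continuousAt)).const_add (Phi 0)

lemma integral_Ici_phi_sub (a b : ℝ) : ∫ z in Ici a, phi (z - b) = 1 - Phi (a - b) := by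
  have key : ∫ z in Ici a, phi (z - b) = ∫ z in Ici (a - b), phi z := by
    calc ∫ z in Ici a, phi (z - b)
        = ∫ z, (Ici a).indicator (fun z => phi (z - b)) z :=
          (integral_indicator measurableSet_Ici).symm
      _ = ∫ z, (Ici a).indicator (fun z => phi (z - b)) (z + b) :=
          (integral_add_right_eq_self _ b).symm
      _ = ∫ z, (Ici (a - b)).indicator phi z := by
          congr 1 with z
          simp only [indicator_apply, mem_Ici, add_sub_cancel_right, sub_le_iff_le_add]
      _ = ∫ z in Ici (a - b), phi z := integral_indicator measurableSet_Ici
  rw [key, integral_Ici_phi]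

lemma integral_phi_sub (b : ℝ) : ∫ z, phi (z - b) = 1 := by
  rw [show (fun z => phi (z - b)) = fun z => phi (z + (-b)) by funext z; rw [sub_eq_add_neg]]
  rw [integral_add_right_eq_self phi (-b), integral_phi]

lemma integral_gaussianReal_eq (f : ℝ → ℝ) :
    ∫ z, f z ∂(gaussianReal 0 1) = ∫ z, f z * phi z := by
  rw [gaussianReal_of_var_ne_zero 0 one_ne_zero]
  rw [show gaussianPDF 0 1 = fun x => ((fun x => (gaussianPDFReal 0 1 x).toNNReal) x : ℝ≥0∞)
      from rfl]
  rw [integral_withDensity_eq_integral_smul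
    (f := fun x => (gaussianPDFReal 0 1 x).toNNReal)
    ((measurable_gaussianPDFReal 0 1).real_toNNReal) f]
  congr 1 with z
  rw [NNReal.smul_def, smul_eq_mul,
    Real.coe_toNNReal _ (gaussianPDFReal_nonneg 0 1 z), mul_comm]
  congr 1
  unfold gaussianPDFReal phi
  norm_num

lemma key_id (A K b : ℝ) (hA : 0 < A) (hK : 0 < K) (hb : 0 < b) :
    A * phi ((Real.log (A / K) + b ^ 2 / 2) / b) =
      K * phi ((Real.log (A / K) + b ^ 2 / 2) / b - b) := by
  set d := (Real.log (A / K) + b ^ 2 / 2) / b with hd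
  have hdb : d * b = Real.log A - Real.log K + b ^ 2 / 2 := by
    rw [hd, div_mul_cancel₀ _ hb.ne', Real.log_div hA.ne' hK.ne']
  unfold phi
  rw [show A * ((Real.sqrt (2 * Real.pi))⁻¹ * Real.exp (-(d ^ 2) / 2))
      = (Real.sqrt (2 * Real.pi))⁻¹ * (A * Real.exp (-(d ^ 2) / 2)) by ring,
    show K * ((Real.sqrt (2 * Real.pi))⁻¹ * Real.exp (-((d - b) ^ 2) / 2))
      = (Real.sqrt (2 * Real.pi))⁻¹ * (K * Real.exp (-((d - b) ^ 2) / 2)) by ring]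
  congr 1
  rw [← Real.exp_log hA, ← Real.exp_log hK, ← Real.exp_add, ← Real.exp_add]
  congr 1
  nlinarith [hdb]

lemma call_closed (A K b : ℝ) (hA : 0 < A) (hK : 0 < K) (hb : 0 < b) :
    ∫ z, max (A * Real.exp (b * z - b ^ 2 / 2) - K) 0 ∂(gaussianReal 0 1)
      = A * Phi ((Real.log (A / K) + b ^ 2 / 2) / b) -
        K * Phi ((Real.log (A / K) + b ^ 2 / 2) / b - b) := by
  set d := (Real.log (A / K) + b ^ 2 / 2) / b with hd
  set z₀ := b - d with hz₀def
  clear_value z₀ d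
  have hbz₀ : b * z₀ = Real.log K - Real.log A + b ^ 2 / 2 := by
    rw [hz₀def, hd, Real.log_div hA.ne' hK.ne']
    field_simp [Real.log_div hA.ne' hK.ne']
    ring
  have hiff : ∀ z : ℝ, z₀ ≤ z ↔ K ≤ A * Real.exp (b * z - b ^ 2 / 2) := by
    intro z
    have h1 : K ≤ A * Real.exp (b * z - b ^ 2 / 2) ↔
        Real.log K ≤ Real.log A + (b * z - b ^ 2 / 2) := by
      conv_lhs => rw [show A * Real.exp (b * z - b ^ 2 / 2)
        = Real.exp (Real.log A + (b * z - b ^ 2 / 2)) by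
          rw [Real.exp_add, Real.exp_log hA]]
      exact (Real.log_le_iff_le_exp hK).symm
    rw [h1]
    constructor
    · intro h
      have := mul_le_mul_of_nonneg_left h hb.le
      linarith
    · intro h
      have h2 : b * z₀ ≤ b * z := by linarith
      exact le_of_mul_le_mul_left h2 hb
  rw [integral_gaussianReal_eq]
  have hind : (fun z => max (A * Real.exp (b * z - b ^ 2 / 2) - K) 0 * phi z)
      = (Ici z₀).indicator (fun z => (A * Real.exp (b * z - b ^ 2 / 2) - K) * phi z) := by
    funext z
    by_cases h : z₀ ≤ z
    · rw [indicator_of_mem (mem_Ici.2 h), max_eq_left (by linarith [(hiff z).1 h])]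
    · rw [indicator_of_notMem (by simpa using h), max_eq_right ?_, zero_mul]
      have h2 : ¬ K ≤ A * Real.exp (b * z - b ^ 2 / 2) := fun hc => h ((hiff z).2 hc)
      push_neg at h2
      linarith
  rw [hind, integral_indicator measurableSet_Ici]
  have hre : ∀ z : ℝ, (A * Real.exp (b * z - b ^ 2 / 2) - K) * phi z
      = A * phi (z - b) - K * phi z := by
    intro z
    rw [sub_mul, mul_assoc, phi_comp_sub]
  rw [integral_congr_ae (Filter.Eventually.of_forall hre)]
  rw [integral_sub (((integrable_phi.comp_sub_right b).const_mul A).integrableOn)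
      ((integrable_phi.const_mul K).integrableOn)]
  rw [integral_const_mul, integral_const_mul, integral_Ici_phi_sub, integral_Ici_phi]
  have e1 : z₀ - b = -d := by rw [hz₀def]; ring
  have e2 : z₀ = -(d - b) := by rw [hz₀def]; ring
  rw [e1, e2, Phi_neg, Phi_neg]
  ring

lemma gaussianPDFReal_eq_phi : gaussianPDFReal 0 1 = phi := by
  funext x
  unfold gaussianPDFReal phi
  norm_num

lemma integrable_gaussian_iff (f : ℝ → ℝ) :
    Integrable f (gaussianReal 0 1) ↔ Integrable (fun z => f z * phi z) := by
  rw [gaussianReal_of_var_ne_zero 0 one_ne_zero,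
    integrable_withDensity_iff (measurable_gaussianPDF 0 1)
      (ae_of_all _ fun x => ENNReal.ofReal_lt_top)]
  simp_rw [gaussianPDF, ENNReal.toReal_ofReal (gaussianPDFReal_nonneg 0 1 _),
    gaussianPDFReal_eq_phi]

lemma integrable_exp_shift (b : ℝ) :
    Integrable (fun z => Real.exp (b * z - b ^ 2 / 2)) (gaussianReal 0 1) := by
  rw [integrable_gaussian_iff]
  have : (fun z => Real.exp (b * z - b ^ 2 / 2) * phi z) = fun z => phi (z - b) := by
    funext z; exact phi_comp_sub z b
  rw [this]
  exact integrable_phi.comp_sub_right b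

lemma integral_exp_shift (b : ℝ) :
    ∫ z, Real.exp (b * z - b ^ 2 / 2) ∂(gaussianReal 0 1) = 1 := by
  rw [integral_gaussianReal_eq]
  have : (fun z => Real.exp (b * z - b ^ 2 / 2) * phi z) = fun z => phi (z - b) := by
    funext z; exact phi_comp_sub z b
  rw [this, integral_phi_sub]

noncomputable def Fc (S₀ E K b y : ℝ) : ℝ :=
  y * S₀ * E * Phi ((Real.log (y * S₀ * E / K) + b ^ 2 / 2) / b) -
    K * Phi ((Real.log (y * S₀ * E / K) + b ^ 2 / 2) / b - b)

lemma Fc_closed (S₀ E K b y : ℝ) (h : 0 < y * S₀ * E) (hK : 0 < K) (hb : 0 < b) :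
    ∫ z, max (y * S₀ * E * Real.exp (b * z - b ^ 2 / 2) - K) 0 ∂(gaussianReal 0 1)
      = Fc S₀ E K b y := by
  unfold Fc
  exact call_closed (y * S₀ * E) K b h hK hb

lemma put_integral (S₀ E K b y : ℝ) (hS : 0 < y * S₀ * E) (hK : 0 < K) (hb : 0 < b) :
    ∫ z, max (K - y * S₀ * E * Real.exp (b * z - b ^ 2 / 2)) 0 ∂(gaussianReal 0 1)
      = Fc S₀ E K b y - y * S₀ * E + K := by
  have hX : Integrable (fun z => y * S₀ * E * Real.exp (b * z - b ^ 2 / 2)) (gaussianReal 0 1) :=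
    (integrable_exp_shift b).const_mul _
  have hXpos : ∀ z : ℝ, 0 < y * S₀ * E * Real.exp (b * z - b ^ 2 / 2) :=
    fun z => mul_pos hS (Real.exp_pos _)
  have hg : Integrable (fun z => max (y * S₀ * E * Real.exp (b * z - b ^ 2 / 2) - K) 0)
      (gaussianReal 0 1) := by
    refine hX.mono ?_ (ae_of_all _ fun z => ?_)
    · exact ((by fun_prop : Continuous fun z : ℝ =>
        y * S₀ * E * Real.exp (b * z - b ^ 2 / 2) - K).max continuous_const).aestronglyMeasurable
    · rw [Real.norm_eq_abs, Real.norm_eq_abs, abs_of_nonneg (le_max_right _ _),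
        abs_of_nonneg (hXpos z).le]
      exact max_le (by linarith [hXpos z]) (hXpos z).le
  have hpt : ∀ z : ℝ, max (K - y * S₀ * E * Real.exp (b * z - b ^ 2 / 2)) 0
      = max (y * S₀ * E * Real.exp (b * z - b ^ 2 / 2) - K) 0
          - y * S₀ * E * Real.exp (b * z - b ^ 2 / 2) + K := by
    intro z
    rcases le_total (y * S₀ * E * Real.exp (b * z - b ^ 2 / 2)) K with h | h
    · rw [max_eq_left (by linarith), max_eq_right (by linarith)]; ring
    · rw [max_eq_right (by linarith), max_eq_left (by linarith)]; ring
  have hsub : Integrable (fun z => max (y * S₀ * E * Real.exp (b * z - b ^ 2 / 2) - K) 0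
      - y * S₀ * E * Real.exp (b * z - b ^ 2 / 2)) (gaussianReal 0 1) := hg.sub hX
  rw [integral_congr_ae (ae_of_all _ hpt),
    integral_add hsub (integrable_const K), integral_sub hg hX, integral_const,
    integral_const_mul, integral_exp_shift,
    Fc_closed S₀ E K b y hS hK hb]
  simp [measure_univ]

lemma hasDerivAt_Fc (S₀ E K b : ℝ) (hS : 0 < S₀) (hE : 0 < E) (hK : 0 < K) (hb : 0 < b) :
    HasDerivAt (fun y => Fc S₀ E K b y)
      (S₀ * E * Phi ((Real.log (S₀ * E / K) + b ^ 2 / 2) / b)) 1 := by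
  have hc : (0:ℝ) < S₀ * E / K := by positivity
  have hval : (1:ℝ) * S₀ * E / K = S₀ * E / K := by ring
  have hu : HasDerivAt (fun y : ℝ => y * S₀ * E / K) (S₀ * E / K) 1 := by
    simpa using (((hasDerivAt_id (1:ℝ)).mul_const S₀).mul_const E).div_const K
  have hlog : HasDerivAt (fun y : ℝ => Real.log (y * S₀ * E / K)) (1:ℝ) 1 := by
    have h := hu.log (by rw [hval]; exact hc.ne')
    rw [hval, div_self hc.ne'] at h
    exact h
  have hD : HasDerivAt (fun y : ℝ => (Real.log (y * S₀ * E / K) + b ^ 2 / 2) / b) (1 / b) 1 := by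
    simpa using (hlog.add_const (b ^ 2 / 2)).div_const b
  set d1 : ℝ := (Real.log (1 * S₀ * E / K) + b ^ 2 / 2) / b with hd1def
  have hPhi1 : HasDerivAt (fun y : ℝ => Phi ((Real.log (y * S₀ * E / K) + b ^ 2 / 2) / b))
      (phi d1 * (1 / b)) 1 := by
    have h := HasDerivAt.comp (1:ℝ) (hasDerivAt_Phi _) hD
    exact h
  have hPhi2 : HasDerivAt (fun y : ℝ => Phi ((Real.log (y * S₀ * E / K) + b ^ 2 / 2) / b - b))
      (phi (d1 - b) * (1 / b)) 1 := by
    have h := HasDerivAt.comp (1:ℝ) (hasDerivAt_Phi _) (hD.sub_const b)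
    exact h
  have hy3 : HasDerivAt (fun y : ℝ => y * S₀ * E) (S₀ * E) 1 := by
    simpa using ((hasDerivAt_id (1:ℝ)).mul_const S₀).mul_const E
  have h1 := hy3.mul hPhi1
  have h2 := hPhi2.const_mul K
  have htot := h1.sub h2
  have hd1 : d1 = (Real.log (S₀ * E / K) + b ^ 2 / 2) / b := by rw [hd1def, hval]
  have hkey := key_id (S₀ * E) K b (by positivity) hK hb
  have hder : S₀ * E * Phi ((Real.log (S₀ * E / K) + b ^ 2 / 2) / b)
      = S₀ * E * Phi ((Real.log (1 * S₀ * E / K) + b ^ 2 / 2) / b)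
        + 1 * S₀ * E * (phi d1 * (1 / b)) - K * (phi (d1 - b) * (1 / b)) := by
    rw [hval, hd1]
    have : S₀ * E * (phi ((Real.log (S₀ * E / K) + b ^ 2 / 2) / b) * (1 / b))
        - K * (phi ((Real.log (S₀ * E / K) + b ^ 2 / 2) / b - b) * (1 / b)) = 0 := by
      linear_combination (1 / b) * hkey
    linarith [this]
  rw [hder]
  unfold Fc
  exact htot

theorem stmt9 (S₀ Kp Kc σ T r μp μc : ℝ) (hS : 0 < S₀) (hKp : 0 < Kp) (hKc : 0 < Kc)
    (hσ : 0 < σ) (hT : 0 < T) (hr : 0 ≤ r) (hμp : 0 < μp) (hμc : 0 < μc)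
    (R : ℝ → ℝ)
    (hR : ∀ y : ℝ, R y =
      μp * (∫ z, max (Kp - y *
              (S₀ * Real.exp (r * T - σ ^ 2 * T / 2 + σ * Real.sqrt T * z))) 0
            ∂(gaussianReal 0 1)) +
      μc * (∫ z, max (y *
              (S₀ * Real.exp (r * T - σ ^ 2 * T / 2 + σ * Real.sqrt T * z)) - Kc) 0
            ∂(gaussianReal 0 1))) :
    HasDerivAt R
        (Real.exp (r * T) * S₀ *
          (μp * (Phi (dBS S₀ Kp r T σ) - 1) + μc * Phi (dBS S₀ Kc r T σ))) 1 ∧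
      (Real.exp (r * T) * S₀ *
            (μp * (Phi (dBS S₀ Kp r T σ) - 1) + μc * Phi (dBS S₀ Kc r T σ)) = 0 ↔
        μc / μp = (1 - Phi (dBS S₀ Kp r T σ)) / Phi (dBS S₀ Kc r T σ)) := by
  have hb : 0 < σ * Real.sqrt T := mul_pos hσ (Real.sqrt_pos.2 hT)
  have hE : 0 < Real.exp (r * T) := Real.exp_pos _
  have hb2 : (σ * Real.sqrt T) ^ 2 = σ ^ 2 * T := by
    rw [mul_pow, Real.sq_sqrt hT.le]
  have hexp : ∀ y z : ℝ,
      y * (S₀ * Real.exp (r * T - σ ^ 2 * T / 2 + σ * Real.sqrt T * z))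
        = y * S₀ * Real.exp (r * T) *
            Real.exp (σ * Real.sqrt T * z - (σ * Real.sqrt T) ^ 2 / 2) := by
    intro y z
    rw [show r * T - σ ^ 2 * T / 2 + σ * Real.sqrt T * z
        = (σ * Real.sqrt T * z - (σ * Real.sqrt T) ^ 2 / 2) + r * T by rw [hb2]; ring,
      Real.exp_add]
    ring
  have hdBS : ∀ K : ℝ, 0 < K →
      (Real.log (S₀ * Real.exp (r * T) / K) + (σ * Real.sqrt T) ^ 2 / 2) / (σ * Real.sqrt T)
        = dBS S₀ K r T σ := by
    intro K hK
    rw [show S₀ * Real.exp (r * T) / K = S₀ / K * Real.exp (r * T) from by ring,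
      Real.log_mul (by positivity) (Real.exp_ne_zero _), Real.log_exp]
    unfold dBS
    rw [hb2]
    ring_nf
  -- closed form near 1
  have hev : ∀ᶠ y in nhds (1:ℝ), R y =
      μp * (Fc S₀ (Real.exp (r * T)) Kp (σ * Real.sqrt T) y - y * S₀ * Real.exp (r * T) + Kp)
        + μc * Fc S₀ (Real.exp (r * T)) Kc (σ * Real.sqrt T) y := by
    filter_upwards [eventually_gt_nhds zero_lt_one] with y hy
    rw [hR y]
    simp_rw [hexp y]
    rw [put_integral S₀ (Real.exp (r * T)) Kp (σ * Real.sqrt T) y (by positivity) hKp hb,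
      Fc_closed S₀ (Real.exp (r * T)) Kc (σ * Real.sqrt T) y (by positivity) hKc hb]
  have h1 := hasDerivAt_Fc S₀ (Real.exp (r * T)) Kp (σ * Real.sqrt T) hS hE hKp hb
  have h2 := hasDerivAt_Fc S₀ (Real.exp (r * T)) Kc (σ * Real.sqrt T) hS hE hKc hb
  have hy3 : HasDerivAt (fun y : ℝ => y * S₀ * Real.exp (r * T)) (S₀ * Real.exp (r * T)) 1 := by
    simpa using ((hasDerivAt_id (1:ℝ)).mul_const S₀).mul_const (Real.exp (r * T))
  have hG := (((h1.sub hy3).add_const Kp).const_mul μp).add (h2.const_mul μc)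
  have hderiv : HasDerivAt R
      (Real.exp (r * T) * S₀ *
        (μp * (Phi (dBS S₀ Kp r T σ) - 1) + μc * Phi (dBS S₀ Kc r T σ))) 1 := by
    have := hG.congr_of_eventuallyEq hev
    refine this.congr_deriv ?_
    rw [← hdBS Kp hKp, ← hdBS Kc hKc]
    ring
  refine ⟨hderiv, ?_⟩
  have hc : 0 < Phi (dBS S₀ Kc r T σ) := Phi_pos _
  constructor
  · intro h
    have h2 : μp * (Phi (dBS S₀ Kp r T σ) - 1) + μc * Phi (dBS S₀ Kc r T σ) = 0 := by
      rcases mul_eq_zero.mp h with h' | h'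
      · exact absurd h' (by positivity)
      · exact h'
    rw [div_eq_div_iff hμp.ne' hc.ne']
    linarith [h2]
  · intro h
    rw [div_eq_div_iff hμp.ne' hc.ne'] at h
    have : μp * (Phi (dBS S₀ Kp r T σ) - 1) + μc * Phi (dBS S₀ Kc r T σ) = 0 := by linarith
    rw [this, mul_zero]
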